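/- If a formula φ is E′-valid and p₁, …, pₙ lists all the atoms occurring in φ, then the formula ((¬¬p₁ → p₁) ∧ … ∧ (¬¬pₙ → pₙ)) → φ is intuitionistically valid. -/

import Mathlib

/- Formalization of Lorenzen dialogue games, following Felscher's presentation.

   Propositional formulas are built from atoms using ¬, ∧, ∨, →.  A dialogue
   for a formula φ is a sequence of moves beginning with Proponent (P)
   asserting φ at position 0, with O moving at odd positions and P at even
   positions.  Each later move attacks or defends an earlier move of the other
   player, according to the particle rules.  Structural rules (D10, D11, D12,
   D13, E, and the variants D10*, D10′) constrain dialogues further.  P wins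
   if P made the last move and no moves are available to O; φ is S-valid if P
   has an S-winning strategy for φ. -/

namespace LorenzenDialogues

/-- Propositional formulas: atoms, ¬, ∧, ∨, →. -/
inductive Formula : Type
  | atom : ℕ → Formula
  | neg  : Formula → Formula
  | and  : Formula → Formula → Formula
  | or   : Formula → Formula → Formula
  | imp  : Formula → Formula → Formula
deriving DecidableEq

/-- Statements: formulas together with the symbolic attacks `?`, `∧_L`, `∧_R`. -/
inductive Statement : Type
  | form  : Formula → Statement
  | qmark : Statement
  | andL  : Statement
  | andR  : Statement
deriving DecidableEq

/-- Particle rules, attack part: which statements attack which formulas. -/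
inductive Attacks : Statement → Formula → Prop
  | andL (a b : Formula) : Attacks .andL (.and a b)
  | andR (a b : Formula) : Attacks .andR (.and a b)
  | qmark (a b : Formula) : Attacks .qmark (.or a b)
  | imp (a b : Formula) : Attacks (.form a) (.imp a b)
  | neg (a : Formula) : Attacks (.form a) (.neg a)

/-- Particle rules, defense part: `Defends χ a s` means `s` is a permitted
    defense of the formula `χ` against the attack `a`.  (A negation admits
    no defense.) -/
inductive Defends : Formula → Statement → Statement → Prop
  | andL (a b : Formula) : Defends (.and a b) .andL (.form a)
  | andR (a b : Formula) : Defends (.and a b) .andR (.form b)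
  | orL (a b : Formula) : Defends (.or a b) .qmark (.form a)
  | orR (a b : Formula) : Defends (.or a b) .qmark (.form b)
  | imp (a b : Formula) : Defends (.imp a b) (.form a) (.form b)

/-- A move: a statement, a flag recording whether it is an attack (`true`)
    or a defense (`false`), and the position of the earlier move it attacks,
    resp. the earlier attack it defends against. -/
structure Move : Type where
  statement : Statement
  isAttack : Bool
  ref : ℕ
deriving DecidableEq

/-- A dialogue: the initial formula asserted by P at position 0, followed by
    the list of later moves (the move at list index `i` occupies position
    `i + 1`; O moves at odd positions, P at even positions). -/
structure Dialogue : Type where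
  initial : Formula
  moves : List Move

/-- The statement asserted at position `n` (if any). -/
def Dialogue.stmtAt (d : Dialogue) (n : ℕ) : Option Statement :=
  if n = 0 then some (.form d.initial) else (d.moves[n - 1]?).map Move.statement

/-- The move at position `n ≥ 1` (if any); position 0 is the initial assertion,
    not a move. -/
def Dialogue.moveAt (d : Dialogue) (n : ℕ) : Option Move :=
  if n = 0 then none else d.moves[n - 1]?

/-- The move `m`, played at position `n ≥ 1`, is permitted by the particle
    rules: it refers to an earlier position of the other player; if it is an
    attack, it attacks a formula asserted there, and if it is a defense, it
    responds to an attack played there, as the particle rules prescribe. -/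
def MoveOK (d : Dialogue) (n : ℕ) (m : Move) : Prop :=
  m.ref < n ∧ m.ref % 2 ≠ n % 2 ∧
    (m.isAttack = true →
      ∃ ψ, d.stmtAt m.ref = some (.form ψ) ∧ Attacks m.statement ψ) ∧
    (m.isAttack = false →
      ∃ a χ, d.moveAt m.ref = some a ∧ a.isAttack = true ∧
        d.stmtAt a.ref = some (.form χ) ∧ Defends χ a.statement m.statement)

/-- The dialogue adheres to the particle rules (every move is legal). -/
def ParticleOK (d : Dialogue) : Prop :=
  ∀ i m, d.moves[i]? = some m → MoveOK d (i + 1) m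

/-- Position `n` carries a defense of the attack made at position `r`. -/
def IsDefenseOf (d : Dialogue) (n r : ℕ) : Prop :=
  ∃ m, d.moveAt n = some m ∧ m.isAttack = false ∧ m.ref = r

/-- Position `n` carries an attack on the assertion made at position `r`. -/
def IsAttackOn (d : Dialogue) (n r : ℕ) : Prop :=
  ∃ m, d.moveAt n = some m ∧ m.isAttack = true ∧ m.ref = r

/-- Position `n` carries an attack. -/
def IsAttackPos (d : Dialogue) (n : ℕ) : Prop :=
  ∃ m, d.moveAt n = some m ∧ m.isAttack = true

/-- The attack at position `r` is still open (no defense against it has yet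
    been played) before position `k`. -/
def OpenAt (d : Dialogue) (r k : ℕ) : Prop :=
  IsAttackPos d r ∧ ¬ ∃ j, j < k ∧ IsDefenseOf d j r

/-- (D10) P may assert an atomic formula only after it has been asserted by O
    before. -/
def D10 (d : Dialogue) : Prop :=
  ∀ n p, n % 2 = 0 → d.stmtAt n = some (.form (.atom p)) →
    ∃ j, j < n ∧ j % 2 = 1 ∧ d.stmtAt j = some (.form (.atom p))

/-- (D10*) P may assert an atom `p` only if O has asserted `p` or `¬p`
    before. -/
def D10star (d : Dialogue) : Prop :=
  ∀ n p, n % 2 = 0 → d.stmtAt n = some (.form (.atom p)) →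
    ∃ j, j < n ∧ j % 2 = 1 ∧
      (d.stmtAt j = some (.form (.atom p)) ∨
        d.stmtAt j = some (.form (.neg (.atom p))))

/-- (D10′) P may assert an atom `p` only if O has asserted `p` or `¬¬p`
    before. -/
def D10prime (d : Dialogue) : Prop :=
  ∀ n p, n % 2 = 0 → d.stmtAt n = some (.form (.atom p)) →
    ∃ j, j < n ∧ j % 2 = 1 ∧
      (d.stmtAt j = some (.form (.atom p)) ∨
        d.stmtAt j = some (.form (.neg (.neg (.atom p)))))

/-- (D11) When defending, only the most recent open attack may be responded
    to: the attack defended against is open, and no strictly more recent open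
    attack (against the same player) exists. -/
def D11 (d : Dialogue) : Prop :=
  ∀ n r, IsDefenseOf d n r →
    OpenAt d r n ∧ ¬ ∃ r', r < r' ∧ r' < n ∧ r' % 2 = r % 2 ∧ OpenAt d r' n

/-- (D12) An attack may be answered at most once. -/
def D12 (d : Dialogue) : Prop :=
  ∀ n₁ n₂ r, IsDefenseOf d n₁ r → IsDefenseOf d n₂ r → n₁ = n₂

/-- (D13) A P-assertion (made at an even position) may be attacked at most
    once. -/
def D13 (d : Dialogue) : Prop :=
  ∀ n₁ n₂ r, r % 2 = 0 → IsAttackOn d n₁ r → IsAttackOn d n₂ r → n₁ = n₂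

/-- (E) O can react only upon the immediately preceding P-statement. -/
def ERule (d : Dialogue) : Prop :=
  ∀ n m, n % 2 = 1 → d.moveAt n = some m → m.ref = n - 1

/-- A ruleset is a set of structural rules, i.e. a predicate on dialogues. -/
def Ruleset := Dialogue → Prop

/-- Ruleset D = {D10, D11, D12, D13}. -/
def rulesetD : Ruleset := fun d => D10 d ∧ D11 d ∧ D12 d ∧ D13 d

/-- Ruleset E = D ∪ {E}. -/
def rulesetE : Ruleset := fun d => rulesetD d ∧ ERule d

/-- Ruleset CL = E − {D11, D12} = {D10, D13, E}. -/
def rulesetCL : Ruleset := fun d => D10 d ∧ D13 d ∧ ERule d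

/-- Ruleset N = D − {D11, D12} = {D10, D13}. -/
def rulesetN : Ruleset := fun d => D10 d ∧ D13 d

/-- Ruleset E* = {D10*, D11, D12, D13, E}. -/
def rulesetEstar : Ruleset :=
  fun d => D10star d ∧ D11 d ∧ D12 d ∧ D13 d ∧ ERule d

/-- Ruleset E′ = {D10′, D11, D12, D13, E}. -/
def rulesetEprime : Ruleset :=
  fun d => D10prime d ∧ D11 d ∧ D12 d ∧ D13 d ∧ ERule d

/-- An S-dialogue: a dialogue adhering to the particle rules and to the
    structural rules S. -/
def Legal (S : Ruleset) (d : Dialogue) : Prop := ParticleOK d ∧ S d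

/-- Extend a dialogue by one move. -/
def Dialogue.extend (d : Dialogue) (m : Move) : Dialogue :=
  ⟨d.initial, d.moves ++ [m]⟩

/-- The position about to be played. -/
def nextPos (d : Dialogue) : ℕ := d.moves.length + 1

/-- It is P's turn (the next position is even). -/
def PTurn (d : Dialogue) : Prop := nextPos d % 2 = 0

/-- The move `m` legally extends the S-dialogue `d`. -/
def LegalExt (S : Ruleset) (d : Dialogue) (m : Move) : Prop :=
  Legal S (d.extend m)

/-- `PWinningC S C d` holds when P, moving under the additional constraint
    `C` on P's own choices, has a winning strategy in the S-dialogue game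
    continuing the dialogue `d`: at P's turn, P has a legal move (satisfying
    `C`) after which P is still winning; at O's turn, every legal O-move
    leads to a position where P is winning (in particular, if no O-move is
    available, P has won: P made the last move and O cannot move). -/
inductive PWinningC (S : Ruleset) (C : Dialogue → Move → Prop) : Dialogue → Prop
  | pMove (d : Dialogue) (m : Move) (hturn : PTurn d)
      (hm : LegalExt S d m) (hC : C d m)
      (h : PWinningC S C (d.extend m)) : PWinningC S C d
  | oMoves (d : Dialogue) (hturn : ¬ PTurn d)
      (h : ∀ m, LegalExt S d m → PWinningC S C (d.extend m)) :
      PWinningC S C d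

/-- P has a winning strategy continuing the S-dialogue `d`. -/
def PWinning (S : Ruleset) (d : Dialogue) : Prop :=
  PWinningC S (fun _ _ => True) d

/-- `valid S φ` (written `⊨_S φ`): the opening assertion of φ is itself a
    legal S-dialogue and P has an S-winning strategy for φ. -/
def valid (S : Ruleset) (φ : Formula) : Prop :=
  Legal S ⟨φ, []⟩ ∧ PWinning S ⟨φ, []⟩

/-- Derivability in intuitionistic propositional logic (a Hilbert-style
    axiomatization with modus ponens). -/
inductive IProv : Formula → Prop
  | k (a b : Formula) : IProv (.imp a (.imp b a))
  | s (a b c : Formula) :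
      IProv (.imp (.imp a (.imp b c)) (.imp (.imp a b) (.imp a c)))
  | andE1 (a b : Formula) : IProv (.imp (.and a b) a)
  | andE2 (a b : Formula) : IProv (.imp (.and a b) b)
  | andI (a b : Formula) : IProv (.imp a (.imp b (.and a b)))
  | orI1 (a b : Formula) : IProv (.imp a (.or a b))
  | orI2 (a b : Formula) : IProv (.imp b (.or a b))
  | orE (a b c : Formula) :
      IProv (.imp (.imp a c) (.imp (.imp b c) (.imp (.or a b) c)))
  | negI (a b : Formula) :
      IProv (.imp (.imp a b) (.imp (.imp a (.neg b)) (.neg a)))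
  | negE (a b : Formula) : IProv (.imp (.neg a) (.imp a b))
  | mp (a b : Formula) : IProv (.imp a b) → IProv a → IProv b

/-- The stability principle ¬¬p → p for the atom `p`. -/
def stab (p : ℕ) : Formula := .imp (.neg (.neg (.atom p))) (.atom p)

/-- Stable logic: intuitionistic propositional logic plus all instances of
    the stability scheme ¬¬p → p for atoms p, closed under modus ponens. -/
inductive StableProv : Formula → Prop
  | intuit (a : Formula) : IProv a → StableProv a
  | stab (p : ℕ) : StableProv (stab p)
  | mp (a b : Formula) : StableProv (.imp a b) → StableProv a → StableProv b

/-- Boolean evaluation of a formula under a valuation of its atoms. -/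
def Formula.eval (v : ℕ → Bool) : Formula → Bool
  | .atom p => v p
  | .neg a => !(a.eval v)
  | .and a b => a.eval v && b.eval v
  | .or a b => a.eval v || b.eval v
  | .imp a b => !(a.eval v) || b.eval v

/-- A classical tautology: true under every Boolean valuation. -/
def Tautology (φ : Formula) : Prop := ∀ v, φ.eval v = true

/-- Uniform substitution of formulas for atoms, applied homomorphically. -/
def Formula.subst (σ : ℕ → Formula) : Formula → Formula
  | .atom p => σ p
  | .neg a => .neg (a.subst σ)
  | .and a b => .and (a.subst σ) (b.subst σ)
  | .or a b => .or (a.subst σ) (b.subst σ)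
  | .imp a b => .imp (a.subst σ) (b.subst σ)

/-- The atoms occurring in a formula. -/
def Formula.atoms : Formula → List ℕ
  | .atom p => [p]
  | .neg a => a.atoms
  | .and a b => a.atoms ++ b.atoms
  | .or a b => a.atoms ++ b.atoms
  | .imp a b => a.atoms ++ b.atoms

/-- Conjunction of a nonempty list of formulas. -/
def conjList (f : Formula) : List Formula → Formula
  | [] => f
  | g :: gs => .and f (conjList g gs)

/-- The conjunction (¬¬p → p) ∧ … of stability instances for the atoms
    `p :: ps`. -/
def stabConj (p : ℕ) (ps : List ℕ) : Formula :=
  conjList (stab p) (ps.map stab)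


/-! ### Auxiliary development: Hilbert-style toolbox for stable logic -/

section Toolbox

private lemma sK (a b : Formula) : StableProv (.imp a (.imp b a)) :=
  StableProv.intuit _ (IProv.k a b)

private lemma sS (a b c : Formula) :
    StableProv (.imp (.imp a (.imp b c)) (.imp (.imp a b) (.imp a c))) :=
  StableProv.intuit _ (IProv.s a b c)

private lemma sMP {a b : Formula} (h1 : StableProv (.imp a b)) (h2 : StableProv a) :
    StableProv b := StableProv.mp a b h1 h2

private lemma sI (a : Formula) : StableProv (.imp a a) :=
  sMP (sMP (sS a (.imp a a) a) (sK a (.imp a a))) (sK a a)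

private lemma sTrans {a b c : Formula} (h1 : StableProv (.imp a b))
    (h2 : StableProv (.imp b c)) : StableProv (.imp a c) :=
  sMP (sMP (sS a b c) (sMP (sK (.imp b c) a) h2)) h1

private lemma sAp2 {A B C : Formula} (h1 : StableProv (.imp A (.imp B C)))
    (h2 : StableProv B) : StableProv (.imp A C) :=
  sMP (sMP (sS A B C) h1) (sMP (sK B A) h2)

/-- object-level B combinator -/
private lemma sB (x y z : Formula) :
    StableProv (.imp (.imp y z) (.imp (.imp x y) (.imp x z))) :=
  sTrans (sK (.imp y z) x) (sS x y z)

/-- object-level C (swap) combinator -/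
private lemma sC (x y z : Formula) :
    StableProv (.imp (.imp x (.imp y z)) (.imp y (.imp x z))) := by
  have d1 := sS x y z
  have e1 := sK (.imp (.imp x y) (.imp x z)) y
  have e2 := sS y (.imp x y) (.imp x z)
  have t := sTrans e1 e2
  have d3 := sAp2 t (sK y x)
  exact sTrans d1 d3

/-- Implication of a formula from a list of hypotheses. -/
def ctxImp (Γ : List Formula) (a : Formula) : Formula := Γ.foldr .imp a

/-- Provability in stable logic from a list of hypotheses. -/
def SP (Γ : List Formula) (a : Formula) : Prop := StableProv (ctxImp Γ a)

lemma SP.ofSt {a : Formula} (h : StableProv a) : ∀ Γ, SP Γ a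
  | [] => h
  | _ :: Γ => sMP (sK _ _) (SP.ofSt h Γ)

private lemma sp_dist : ∀ (Γ : List Formula) (a b : Formula),
    StableProv (.imp (ctxImp Γ (.imp a b)) (.imp (ctxImp Γ a) (ctxImp Γ b)))
  | [], a, b => sI _
  | c :: Γ, a, b => by
      have IH := sp_dist Γ a b
      have t1 := sMP (sB c (ctxImp Γ (.imp a b)) (.imp (ctxImp Γ a) (ctxImp Γ b))) IH
      have t2 := sS c (ctxImp Γ a) (ctxImp Γ b)
      exact sTrans t1 t2

lemma SP.mp {Γ : List Formula} {a b : Formula} (h1 : SP Γ (.imp a b)) (h2 : SP Γ a) :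
    SP Γ b := sMP (sMP (sp_dist Γ a b) h1) h2

lemma SP.weak {Γ : List Formula} {a c : Formula} (h : SP Γ a) : SP (c :: Γ) a :=
  sMP (sK _ _) h

private lemma ctx_absorb : ∀ (Γ : List Formula) (a : Formula),
    StableProv (.imp a (ctxImp Γ a))
  | [], a => sI a
  | c :: Γ, a => sTrans (ctx_absorb Γ a) (sK (ctxImp Γ a) c)

lemma SP.hyp : ∀ {Γ : List Formula} {a : Formula}, a ∈ Γ → SP Γ a := by
  intro Γ
  induction Γ with
  | nil => intro a ha; exact absurd ha List.not_mem_nil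
  | cons c Γ ih =>
      intro a ha
      rcases List.mem_cons.1 ha with rfl | ha
      · exact ctx_absorb Γ a
      · exact SP.weak (ih ha)

private lemma ctx_swap : ∀ (Γ : List Formula) (a b : Formula),
    StableProv (.imp (.imp a (ctxImp Γ b)) (ctxImp Γ (.imp a b)))
  | [], a, b => sI _
  | c :: Γ, a, b =>
      sTrans (sC a c (ctxImp Γ b))
        (sMP (sB c (.imp a (ctxImp Γ b)) (ctxImp Γ (.imp a b))) (ctx_swap Γ a b))

lemma SP.lam {Γ : List Formula} {a b : Formula} (h : SP (a :: Γ) b) : SP Γ (.imp a b) :=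
  sMP (ctx_swap Γ a b) h

lemma SP.cut {Γ : List Formula} {a b : Formula} (h1 : SP (a :: Γ) b) (h2 : SP Γ a) :
    SP Γ b := (SP.lam h1).mp h2

lemma SP.ofI {Γ : List Formula} {a : Formula} (h : IProv a) : SP Γ a :=
  SP.ofSt (StableProv.intuit _ h) Γ

lemma SP.orE' {Γ : List Formula} {a b g : Formula} (h : SP Γ (.or a b))
    (h1 : SP (a :: Γ) g) (h2 : SP (b :: Γ) g) : SP Γ g :=
  (((SP.ofI (IProv.orE a b g)).mp (SP.lam h1)).mp (SP.lam h2)).mp h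

/-- a convenient falsum -/
def botF : Formula := .neg (.imp (.atom 0) (.atom 0))

private lemma ipMP {a b : Formula} (h1 : IProv (.imp a b)) (h2 : IProv a) : IProv b :=
  IProv.mp a b h1 h2

private lemma ipI (a : Formula) : IProv (.imp a a) :=
  ipMP (ipMP (IProv.s a (.imp a a) a) (IProv.k a (.imp a a))) (IProv.k a a)

lemma SP.botE {Γ : List Formula} {c : Formula} (h : SP Γ botF) : SP Γ c :=
  ((SP.ofI (IProv.negE (.imp (.atom 0) (.atom 0)) c)).mp h).mp (SP.ofI (ipI _))

lemma SP.negI' {Γ : List Formula} {a : Formula} (h : SP (a :: Γ) botF) : SP Γ (.neg a) := by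
  have h1 : SP Γ (.imp a (.neg (.imp (.atom 0) (.atom 0)))) := SP.lam h
  have h2 : SP Γ (.imp a (.imp (.atom 0) (.atom 0))) :=
    SP.lam (SP.weak (SP.ofI (ipI (.atom 0))))
  exact ((SP.ofI (IProv.negI a (.imp (.atom 0) (.atom 0)))).mp h2).mp h1

end Toolbox

/-! ### The abstract focused game extracted from E′-dialogues -/

section AbstractGame

/-- Focus of the abstract game state. -/
inductive AFocus : Type
  | fnone : AFocus
  | fdef (ψ : Formula) : AFocus
  | fimp (a b : Formula) : AFocus
  | fcon (δ : Formula) : AFocus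
  | fds (a b : Formula) : AFocus

abbrev AbsStack := List (List Formula)

/-- Abstract winning positions for P. -/
inductive AWin : List Formula → AbsStack → AFocus → Prop
  | defend (Γ : List Formula) (D : List Formula) (rest : AbsStack) (ψ : Formula)
      (hψ : ψ ∈ D) (hlen : D.length ≤ 2)
      (h : AWin Γ rest (.fdef ψ)) : AWin Γ (D :: rest) .fnone
  | atkAndL (Γ : List Formula) (s : AbsStack) (a b : Formula)
      (hm : Formula.and a b ∈ Γ) (h : AWin Γ s (.fcon a)) : AWin Γ s .fnone
  | atkAndR (Γ : List Formula) (s : AbsStack) (a b : Formula)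
      (hm : Formula.and a b ∈ Γ) (h : AWin Γ s (.fcon b)) : AWin Γ s .fnone
  | atkOr (Γ : List Formula) (s : AbsStack) (a b : Formula)
      (hm : Formula.or a b ∈ Γ) (h : AWin Γ s (.fds a b)) : AWin Γ s .fnone
  | atkImp (Γ : List Formula) (s : AbsStack) (a b : Formula)
      (hm : Formula.imp a b ∈ Γ) (h : AWin Γ s (.fimp a b)) : AWin Γ s .fnone
  | atkNeg (Γ : List Formula) (s : AbsStack) (a : Formula)
      (hm : Formula.neg a ∈ Γ) (h : AWin Γ s (.fdef a)) : AWin Γ s .fnone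
  | fdefAtom (Γ : List Formula) (s : AbsStack) (q : ℕ)
      (hq : Formula.atom q ∈ Γ ∨ Formula.neg (.neg (.atom q)) ∈ Γ) :
      AWin Γ s (.fdef (.atom q))
  | fdefAnd (Γ : List Formula) (s : AbsStack) (a b : Formula)
      (h1 : AWin Γ ([a] :: s) .fnone) (h2 : AWin Γ ([b] :: s) .fnone) :
      AWin Γ s (.fdef (.and a b))
  | fdefOr (Γ : List Formula) (s : AbsStack) (a b : Formula)
      (h : AWin Γ ([a, b] :: s) .fnone) : AWin Γ s (.fdef (.or a b))
  | fdefImp (Γ : List Formula) (s : AbsStack) (a b : Formula)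
      (h : AWin (a :: Γ) ([b] :: s) .fnone) : AWin Γ s (.fdef (.imp a b))
  | fdefNeg (Γ : List Formula) (s : AbsStack) (a : Formula)
      (h : AWin (a :: Γ) ([] :: s) .fnone) : AWin Γ s (.fdef (.neg a))
  | fimpI (Γ : List Formula) (s : AbsStack) (a b : Formula)
      (h1 : AWin (b :: Γ) s .fnone) (h2 : AWin Γ s (.fdef a)) : AWin Γ s (.fimp a b)
  | fconI (Γ : List Formula) (s : AbsStack) (δ : Formula)
      (h : AWin (δ :: Γ) s .fnone) : AWin Γ s (.fcon δ)
  | fdsI (Γ : List Formula) (s : AbsStack) (a b : Formula)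
      (h1 : AWin (a :: Γ) s .fnone) (h2 : AWin (b :: Γ) s .fnone) : AWin Γ s (.fds a b)

/-- Disjunction of defence options. -/
def disL : List Formula → Formula
  | [] => botF
  | [a] => a
  | a :: b :: _ => .or a b

/-- Goal of the stack. -/
def gdis : AbsStack → Formula
  | [] => botF
  | D :: _ => disL D

/-- Proof-theoretic interpretation of abstract states. -/
def finterp (Γ : List Formula) (s : AbsStack) : AFocus → Prop
  | .fnone => SP Γ (gdis s)
  | .fdef ψ => SP Γ ψ
  | .fimp a b => SP Γ a ∧ SP (b :: Γ) (gdis s)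
  | .fcon δ => SP (δ :: Γ) (gdis s)
  | .fds a b => SP (a :: Γ) (gdis s) ∧ SP (b :: Γ) (gdis s)

theorem AWin.sound : ∀ {Γ : List Formula} {s : AbsStack} {f : AFocus},
    AWin Γ s f → finterp Γ s f := by
  intro Γ s f h
  induction h with
  | defend Γ D rest ψ hψ hlen h ih =>
      show SP Γ (gdis (D :: rest))
      have ihψ : SP Γ ψ := ih
      match D, hψ, hlen with
      | [x], hψ, _ =>
          rcases List.mem_singleton.1 hψ with rfl
          exact ihψ
      | [x, y], hψ, _ =>
          rcases List.mem_cons.1 hψ with rfl | hψ'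
          · exact (SP.ofI (IProv.orI1 ψ y)).mp ihψ
          · rcases List.mem_singleton.1 hψ' with rfl
            exact (SP.ofI (IProv.orI2 x ψ)).mp ihψ
      | x :: y :: z :: t, _, hlen => simp at hlen
  | atkAndL Γ s a b hm h ih =>
      exact SP.cut ih ((SP.ofI (IProv.andE1 a b)).mp (SP.hyp hm))
  | atkAndR Γ s a b hm h ih =>
      exact SP.cut ih ((SP.ofI (IProv.andE2 a b)).mp (SP.hyp hm))
  | atkOr Γ s a b hm h ih =>
      exact SP.orE' (SP.hyp hm) ih.1 ih.2
  | atkImp Γ s a b hm h ih =>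
      exact SP.cut ih.2 ((SP.hyp hm).mp ih.1)
  | atkNeg Γ s a hm h ih =>
      exact ((SP.ofI (IProv.negE a (gdis s))).mp (SP.hyp hm)).mp ih
  | fdefAtom Γ s q hq =>
      rcases hq with hq | hq
      · exact SP.hyp hq
      · exact (SP.ofSt (StableProv.stab q) Γ).mp (SP.hyp hq)
  | fdefAnd Γ s a b h1 h2 ih1 ih2 =>
      exact ((SP.ofI (IProv.andI a b)).mp ih1).mp ih2
  | fdefOr Γ s a b h ih => exact ih
  | fdefImp Γ s a b h ih => exact SP.lam ih
  | fdefNeg Γ s a h ih => exact SP.negI' ih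
  | fimpI Γ s a b h1 h2 ih1 ih2 => exact ⟨ih2, ih1⟩
  | fconI Γ s δ h ih => exact ih
  | fdsI Γ s a b h1 h2 ih1 ih2 => exact ⟨ih1, ih2⟩

end AbstractGame

/-! ### Dialogue state analysis -/

section DialogueState

/-- Formula asserted by an O-move (list index `i`, position `i+1`). -/
def isFormO (x : ℕ × Move) : Option Formula :=
  if x.1 % 2 = 0 then
    match x.2.statement with
    | .form ψ => some ψ
    | _ => none
  else none

/-- Indexed list (replacement for the removed `List.enum`). -/
def _root_.List.enum {α : Type} (l : List α) : List (ℕ × α) := l.zipIdx.map Prod.swap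

/-- Formulas asserted by O, newest first. -/
def oForms (d : Dialogue) : List Formula := (d.moves.enum.filterMap isFormO).reverse

/-- Position `r` carries an attack (boolean version). -/
def isAtkB (d : Dialogue) (r : ℕ) : Bool :=
  match d.moveAt r with
  | some mv => mv.isAttack
  | none => false

/-- Position `j` carries a defence of the attack at `r` (boolean version). -/
def defB (d : Dialogue) (j r : ℕ) : Bool :=
  match d.moveAt j with
  | some mv => !mv.isAttack && mv.ref == r
  | none => false

/-- The attack at `r` is open (boolean version). -/
def openB (d : Dialogue) (r : ℕ) : Bool :=
  isAtkB d r && !((List.range (d.moves.length + 1)).any (fun j => defB d j r))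

/-- Positions of open attacks by O, most recent first. -/
def pstack (d : Dialogue) : List ℕ :=
  ((List.range (d.moves.length + 1)).filter (fun r => r % 2 == 1 && openB d r)).reverse

/-- Defence options against the attack at position `r`. -/
def entryAux (s : Statement) (t : Option Statement) : List Formula :=
  match s, t with
  | .andL, some (.form (.and x _)) => [x]
  | .andR, some (.form (.and _ y)) => [y]
  | .qmark, some (.form (.or x y)) => [x, y]
  | .form _, some (.form (.imp _ y)) => [y]
  | _, _ => []

def entry (d : Dialogue) (r : ℕ) : List Formula :=
  match d.moveAt r with
  | some atk => entryAux atk.statement (d.stmtAt atk.ref)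
  | none => []

def absStack (d : Dialogue) : AbsStack := (pstack d).map (entry d)

/-- The focus of a dialogue state. -/
def FocusRel (d : Dialogue) : AFocus → Prop
  | .fnone => (d.moves.length + 1) % 2 = 0
  | .fdef ψ => (d.moves.length + 1) % 2 = 1 ∧
      ((d.moves = [] ∧ ψ = d.initial) ∨
        (∃ mv, d.moveAt d.moves.length = some mv ∧ mv.statement = .form ψ ∧
          (mv.isAttack = false ∨
            (mv.isAttack = true ∧ d.stmtAt mv.ref = some (.form (.neg ψ))))))
  | .fimp a b => (d.moves.length + 1) % 2 = 1 ∧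
      ∃ mv, d.moveAt d.moves.length = some mv ∧ mv.isAttack = true ∧
        mv.statement = .form a ∧ d.stmtAt mv.ref = some (.form (.imp a b))
  | .fcon δ => (d.moves.length + 1) % 2 = 1 ∧
      ∃ mv, d.moveAt d.moves.length = some mv ∧ mv.isAttack = true ∧
        ((mv.statement = .andL ∧ ∃ y, d.stmtAt mv.ref = some (.form (.and δ y))) ∨
          (mv.statement = .andR ∧ ∃ x, d.stmtAt mv.ref = some (.form (.and x δ))))
  | .fds a b => (d.moves.length + 1) % 2 = 1 ∧
      ∃ mv, d.moveAt d.moves.length = some mv ∧ mv.isAttack = true ∧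
        mv.statement = .qmark ∧ d.stmtAt mv.ref = some (.form (.or a b))

def Rep (d : Dialogue) (Γ : List Formula) (s : AbsStack) (f : AFocus) : Prop :=
  Γ = oForms d ∧ s = absStack d ∧ FocusRel d f

/-! #### Basic lemmas about positions -/

lemma moveAt_some_bounds {d : Dialogue} {k : ℕ} {mv : Move} (h : d.moveAt k = some mv) :
    1 ≤ k ∧ k ≤ d.moves.length := by
  unfold Dialogue.moveAt at h
  split at h
  · exact absurd h (by simp)
  · rename_i hk
    obtain ⟨h1, -⟩ := List.getElem?_eq_some_iff.1 h
    omega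

lemma moveAt_extend_of_le {d : Dialogue} {m : Move} {k : ℕ} (hk : k ≤ d.moves.length) :
    (d.extend m).moveAt k = d.moveAt k := by
  unfold Dialogue.moveAt Dialogue.extend
  by_cases h0 : k = 0
  · simp [h0]
  · simp only [if_neg h0]
    rw [List.getElem?_append_left (by omega)]

lemma moveAt_extend_self {d : Dialogue} {m : Move} :
    (d.extend m).moveAt (d.moves.length + 1) = some m := by
  unfold Dialogue.moveAt Dialogue.extend
  simp

lemma stmtAt_extend_of_le {d : Dialogue} {m : Move} {k : ℕ} (hk : k ≤ d.moves.length) :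
    (d.extend m).stmtAt k = d.stmtAt k := by
  unfold Dialogue.stmtAt Dialogue.extend
  by_cases h0 : k = 0
  · simp [h0]
  · simp only [if_neg h0]
    rw [List.getElem?_append_left (by omega)]

lemma stmtAt_extend_self {d : Dialogue} {m : Move} :
    (d.extend m).stmtAt (d.moves.length + 1) = some m.statement := by
  unfold Dialogue.stmtAt Dialogue.extend
  simp

lemma stmtAt_of_moveAt {d : Dialogue} {k : ℕ} {mv : Move} (h : d.moveAt k = some mv) :
    d.stmtAt k = some mv.statement := by
  have hb := moveAt_some_bounds h
  unfold Dialogue.moveAt at h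
  unfold Dialogue.stmtAt
  rw [if_neg (by omega)] at h ⊢
  rw [h, Option.map_some]

lemma refLt {d : Dialogue} (hP : ParticleOK d) {j : ℕ} {mv : Move}
    (h : d.moveAt j = some mv) : mv.ref < j := by
  have hb := moveAt_some_bounds h
  unfold Dialogue.moveAt at h
  rw [if_neg (by omega)] at h
  have := (hP (j - 1) mv h).1
  omega

lemma moveOK_last {d : Dialogue} {m : Move} (hP : ParticleOK (d.extend m)) :
    MoveOK (d.extend m) (d.moves.length + 1) m := by
  have : (d.extend m).moves[d.moves.length]? = some m := by
    unfold Dialogue.extend; simp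
  exact hP d.moves.length m this

/-! #### Transfer of the structural notions along `extend` -/

lemma isDef_extend_of_le {d : Dialogue} {m : Move} {j r : ℕ} (hj : j ≤ d.moves.length) :
    IsDefenseOf (d.extend m) j r ↔ IsDefenseOf d j r := by
  unfold IsDefenseOf
  rw [moveAt_extend_of_le hj]

lemma isDef_bounds {d : Dialogue} {j r : ℕ} (h : IsDefenseOf d j r) :
    1 ≤ j ∧ j ≤ d.moves.length := by
  obtain ⟨mv, hmv, -, -⟩ := h
  exact moveAt_some_bounds hmv

lemma isAtkPos_extend_of_le {d : Dialogue} {m : Move} {r : ℕ} (hr : r ≤ d.moves.length) :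
    IsAttackPos (d.extend m) r ↔ IsAttackPos d r := by
  unfold IsAttackPos
  rw [moveAt_extend_of_le hr]

lemma openAt_extend_of_le {d : Dialogue} {m : Move} {r k : ℕ}
    (hk : k ≤ d.moves.length + 1) (hr : r ≤ d.moves.length) :
    OpenAt (d.extend m) r k ↔ OpenAt d r k := by
  unfold OpenAt
  rw [isAtkPos_extend_of_le hr]
  constructor
  · rintro ⟨h1, h2⟩
    refine ⟨h1, fun ⟨j, hj, hd⟩ => h2 ⟨j, hj, ?_⟩⟩
    exact (isDef_extend_of_le (by omega)).2 hd
  · rintro ⟨h1, h2⟩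
    refine ⟨h1, fun ⟨j, hj, hd⟩ => h2 ⟨j, hj, ?_⟩⟩
    exact (isDef_extend_of_le (by omega)).1 hd

/-! #### Boolean bridges -/

lemma isAtkB_iff {d : Dialogue} {r : ℕ} : isAtkB d r = true ↔ IsAttackPos d r := by
  unfold isAtkB IsAttackPos
  cases h : d.moveAt r <;> simp

lemma defB_iff {d : Dialogue} {j r : ℕ} : defB d j r = true ↔ IsDefenseOf d j r := by
  unfold defB IsDefenseOf
  cases h : d.moveAt j <;> simp

lemma openB_iff {d : Dialogue} {r : ℕ} :
    openB d r = true ↔ OpenAt d r (d.moves.length + 1) := by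
  unfold openB OpenAt
  simp only [Bool.and_eq_true, Bool.not_eq_true', isAtkB_iff]
  constructor
  · rintro ⟨h1, h2⟩
    refine ⟨h1, fun ⟨j, hj, hd⟩ => ?_⟩
    have : (List.range (d.moves.length + 1)).any (fun j => defB d j r) = true :=
      List.any_eq_true.2 ⟨j, List.mem_range.2 hj, defB_iff.2 hd⟩
    rw [this] at h2; exact absurd h2 (by simp)
  · rintro ⟨h1, h2⟩
    refine ⟨h1, ?_⟩
    by_contra hc
    rw [Bool.not_eq_false, List.any_eq_true] at hc
    obtain ⟨j, hj, hd⟩ := hc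
    exact h2 ⟨j, List.mem_range.1 hj, defB_iff.1 hd⟩

lemma mem_pstack {d : Dialogue} {r : ℕ} :
    r ∈ pstack d ↔ r < d.moves.length + 1 ∧ r % 2 = 1 ∧ openB d r = true := by
  unfold pstack
  simp [List.mem_filter, Nat.beq_eq_true_eq, and_assoc]

lemma pstack_pairwise (d : Dialogue) : (pstack d).Pairwise (· > ·) := by
  unfold pstack
  rw [List.pairwise_reverse]
  exact List.pairwise_lt_range.filter _

lemma pstack_eq_cons_of_max {d : Dialogue} {r : ℕ} (hr : r ∈ pstack d)
    (hmax : ∀ r' ∈ pstack d, r' ≤ r) : ∃ rest, pstack d = r :: rest := by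
  cases h : pstack d with
  | nil => rw [h] at hr; exact absurd hr List.not_mem_nil
  | cons h0 t =>
      rw [h] at hr
      rcases List.mem_cons.1 hr with rfl | hrt
      · exact ⟨t, rfl⟩
      · have hp := pstack_pairwise d
        rw [h] at hp
        have := (List.pairwise_cons.1 hp).1 r hrt
        have := hmax h0 (by rw [h]; exact List.mem_cons_self)
        omega

end DialogueState

/-! #### Transport of the state functions along `extend` -/

section Transport

variable {d : Dialogue} {m : Move}

private lemma any_congr' {l : List ℕ} {f g : ℕ → Bool} (h : ∀ x ∈ l, f x = g x) :
    l.any f = l.any g := by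
  induction l with
  | nil => rfl
  | cons a l ih =>
      simp only [List.any_cons, h a (List.mem_cons_self),
        ih fun x hx => h x (List.mem_cons_of_mem _ hx)]

private lemma filter_congr' {l : List ℕ} {f g : ℕ → Bool} (h : ∀ x ∈ l, f x = g x) :
    l.filter f = l.filter g := by
  induction l with
  | nil => rfl
  | cons a l ih =>
      simp only [List.filter_cons, h a (List.mem_cons_self)]
      rw [ih fun x hx => h x (List.mem_cons_of_mem _ hx)]

lemma extend_moves_length : (d.extend m).moves.length = d.moves.length + 1 := by
  simp [Dialogue.extend]

lemma oForms_extend :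
    oForms (d.extend m) = (isFormO (d.moves.length, m)).toList ++ oForms d := by
  have he : (d.moves ++ [m]).enum = d.moves.enum ++ [(d.moves.length, m)] := by
    simp [List.enum, List.zipIdx_append]
  show (((d.moves ++ [m]).enum.filterMap isFormO)).reverse = _
  rw [he, List.filterMap_append, List.reverse_append]
  cases h : isFormO (d.moves.length, m) <;> simp [h, oForms]

lemma oForms_extend_P (hn : d.moves.length % 2 = 1) : oForms (d.extend m) = oForms d := by
  rw [oForms_extend]
  have : isFormO (d.moves.length, m) = none := by
    unfold isFormO; rw [if_neg (by omega)]
  rw [this]; rfl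

lemma oForms_extend_O_form {ψ : Formula} (hn : d.moves.length % 2 = 0)
    (hs : m.statement = .form ψ) : oForms (d.extend m) = ψ :: oForms d := by
  rw [oForms_extend]
  have : isFormO (d.moves.length, m) = some ψ := by
    unfold isFormO; rw [if_pos hn, hs]
  rw [this]; rfl

lemma oForms_extend_none (hs : isFormO (d.moves.length, m) = none) :
    oForms (d.extend m) = oForms d := by
  rw [oForms_extend, hs]; rfl

lemma mem_oForms {ψ : Formula} {j : ℕ} (hj : j % 2 = 1)
    (h : d.stmtAt j = some (.form ψ)) : ψ ∈ oForms d := by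
  unfold Dialogue.stmtAt at h
  rw [if_neg (by omega)] at h
  obtain ⟨mv, hmv, hst⟩ := Option.map_eq_some_iff.1 h
  have hmem : (j - 1, mv) ∈ d.moves.enum := by
    rw [List.enum, List.mem_map]
    exact ⟨(mv, j - 1), List.mem_zipIdx_iff_getElem?.2 hmv, rfl⟩
  unfold oForms
  rw [List.mem_reverse]
  refine List.mem_filterMap.2 ⟨(j - 1, mv), hmem, ?_⟩
  unfold isFormO
  rw [if_pos (by omega)]
  rw [hst]

lemma isAtkB_extend_of_le {k : ℕ} (hk : k ≤ d.moves.length) :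
    isAtkB (d.extend m) k = isAtkB d k := by
  unfold isAtkB; rw [moveAt_extend_of_le hk]

lemma defB_extend_of_le {j r : ℕ} (hj : j ≤ d.moves.length) :
    defB (d.extend m) j r = defB d j r := by
  unfold defB; rw [moveAt_extend_of_le hj]

lemma defB_extend_self {r : ℕ} :
    defB (d.extend m) (d.moves.length + 1) r = (!m.isAttack && m.ref == r) := by
  unfold defB; rw [moveAt_extend_self]

lemma defB_old_false (hP : ParticleOK d) {j r : ℕ} (hr : j ≤ r) : defB d j r = false := by
  unfold defB
  cases h : d.moveAt j with
  | none => rfl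
  | some mv =>
      have hlt := refLt hP h
      have hne : (mv.ref == r) = false := by simp; omega
      show (!mv.isAttack && (mv.ref == r)) = false
      rw [hne]; simp

lemma openB_extend_of_le (hP : ParticleOK d) {k : ℕ} (hk : k ≤ d.moves.length) :
    openB (d.extend m) k = (openB d k && !(!m.isAttack && m.ref == k)) := by
  unfold openB
  rw [isAtkB_extend_of_le hk, extend_moves_length, List.range_succ, List.any_append]
  have h1 : ((List.range (d.moves.length + 1)).any fun j => defB (d.extend m) j k) =
      ((List.range (d.moves.length + 1)).any fun j => defB d j k) :=
    any_congr' fun j hj => defB_extend_of_le (by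
      have := List.mem_range.1 hj; omega)
  rw [h1]
  simp only [List.any_cons, List.any_nil, Bool.or_false, defB_extend_self]
  rw [Bool.not_or, ← Bool.and_assoc]

lemma openB_extend_self (hP : ParticleOK d) (href : m.ref ≤ d.moves.length) :
    openB (d.extend m) (d.moves.length + 1) = m.isAttack := by
  unfold openB
  have h1 : isAtkB (d.extend m) (d.moves.length + 1) = m.isAttack := by
    unfold isAtkB; rw [moveAt_extend_self]
  have h2 : ((List.range ((d.extend m).moves.length + 1)).any
      fun j => defB (d.extend m) j (d.moves.length + 1)) = false := by
    rw [List.any_eq_false]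
    intro j hj
    have hj' := List.mem_range.1 hj
    rw [extend_moves_length] at hj'
    by_cases hle : j ≤ d.moves.length
    · rw [defB_extend_of_le hle]
      rw [defB_old_false hP (j := j) (r := d.moves.length + 1) (by omega)]
      simp
    · have : j = d.moves.length + 1 := by omega
      subst this
      rw [defB_extend_self]
      have : (m.ref == d.moves.length + 1) = false := by
        simp; omega
      rw [this]
      simp
  rw [h1, h2]
  simp

lemma entry_extend_of_le (hP : ParticleOK d) {k : ℕ} (hk : k ≤ d.moves.length) :
    entry (d.extend m) k = entry d k := by
  unfold entry
  rw [moveAt_extend_of_le hk]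
  cases h : d.moveAt k with
  | none => rfl
  | some atk =>
      show entryAux atk.statement ((d.extend m).stmtAt atk.ref) =
        entryAux atk.statement (d.stmtAt atk.ref)
      rw [stmtAt_extend_of_le (k := atk.ref) (by have := refLt hP h; omega)]

lemma pstack_filter_eq : (List.range (d.moves.length + 1)).filter
    (fun r => r % 2 == 1 && openB d r) = (pstack d).reverse := by
  unfold pstack; rw [List.reverse_reverse]

private lemma filter_and (l : List ℕ) (p q : ℕ → Bool) :
    l.filter (fun a => p a && q a) = (l.filter p).filter q := by
  induction l with
  | nil => rfl
  | cons a l ih =>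
      cases hp : p a <;> cases hq : q a <;>
        simp [List.filter_cons, hp, hq, ih]

lemma pstack_extend_expand : pstack (d.extend m) =
    (((List.range (d.moves.length + 1 + 1)).filter
      (fun r => r % 2 == 1 && openB (d.extend m) r))).reverse := by
  unfold pstack
  rw [extend_moves_length]

/-- case: the new move is an attack by O -/
lemma pstack_extend_Oatk (hP : ParticleOK d) (hn : d.moves.length % 2 = 0)
    (hatk : m.isAttack = true) (href : m.ref ≤ d.moves.length) :
    pstack (d.extend m) = (d.moves.length + 1) :: pstack d := by
  rw [pstack_extend_expand, List.range_succ, List.filter_append, List.reverse_append]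
  have h1 : (List.range (d.moves.length + 1)).filter
      (fun r => r % 2 == 1 && openB (d.extend m) r) = (pstack d).reverse := by
    rw [filter_congr' (g := fun r => r % 2 == 1 && openB d r), pstack_filter_eq]
    intro r hr
    rw [openB_extend_of_le hP (by have := List.mem_range.1 hr; omega)]
    rw [hatk]
    simp
  have h2 : [d.moves.length + 1].filter
      (fun r => r % 2 == 1 && openB (d.extend m) r) = [d.moves.length + 1] := by
    have hc : ((d.moves.length + 1) % 2 == 1 && openB (d.extend m) (d.moves.length + 1)) = true := by
      rw [openB_extend_self hP href, hatk]
      simp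
      omega
    simp [List.filter_cons, hc]
  rw [h1, h2]
  simp

/-- case: the new move is a defence by O (of an attack at an even position) -/
lemma pstack_extend_Odef (hP : ParticleOK d) (hdef : m.isAttack = false)
    (hrefpar : m.ref % 2 = 0) (href : m.ref ≤ d.moves.length) :
    pstack (d.extend m) = pstack d := by
  rw [pstack_extend_expand, List.range_succ, List.filter_append]
  have h1 : (List.range (d.moves.length + 1)).filter
      (fun r => r % 2 == 1 && openB (d.extend m) r) = (pstack d).reverse := by
    rw [filter_congr' (g := fun r => r % 2 == 1 && openB d r), pstack_filter_eq]
    intro r hr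
    rw [openB_extend_of_le hP (by have := List.mem_range.1 hr; omega)]
    by_cases hodd : r % 2 = 1
    · have : (m.ref == r) = false := by simp; omega
      rw [hdef, this]
      simp
    · have : (r % 2 == 1) = false := by simp; omega
      rw [this]
      simp
  have h2 : [d.moves.length + 1].filter
      (fun r => r % 2 == 1 && openB (d.extend m) r) = [] := by
    have hc : ((d.moves.length + 1) % 2 == 1 && openB (d.extend m) (d.moves.length + 1)) = false := by
      rw [openB_extend_self hP href, hdef]
      simp
    simp [List.filter_cons, hc]
  rw [h1, h2]
  simp

/-- case: the new move is an attack by P -/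
lemma pstack_extend_Patk (hP : ParticleOK d) (hn : d.moves.length % 2 = 1)
    (hatk : m.isAttack = true) (href : m.ref ≤ d.moves.length) :
    pstack (d.extend m) = pstack d := by
  rw [pstack_extend_expand, List.range_succ, List.filter_append]
  have h1 : (List.range (d.moves.length + 1)).filter
      (fun r => r % 2 == 1 && openB (d.extend m) r) = (pstack d).reverse := by
    rw [filter_congr' (g := fun r => r % 2 == 1 && openB d r), pstack_filter_eq]
    intro r hr
    rw [openB_extend_of_le hP (by have := List.mem_range.1 hr; omega)]
    rw [hatk]
    simp
  have h2 : [d.moves.length + 1].filter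
      (fun r => r % 2 == 1 && openB (d.extend m) r) = [] := by
    have hc : ((d.moves.length + 1) % 2 == 1) = false := by simp; omega
    simp [List.filter_cons, hc]
  rw [h1, h2]
  simp

/-- case: the new move is a defence by P of the most recent open attack -/
lemma pstack_extend_Pdef (hP : ParticleOK d) (hdef : m.isAttack = false)
    (hn : d.moves.length % 2 = 1) {rest : List ℕ} (hps : pstack d = m.ref :: rest) :
    pstack (d.extend m) = rest := by
  have href : m.ref ≤ d.moves.length := by
    have : m.ref ∈ pstack d := by rw [hps]; exact List.mem_cons_self
    have := (mem_pstack.1 this).1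
    omega
  rw [pstack_extend_expand, List.range_succ, List.filter_append]
  have h1 : (List.range (d.moves.length + 1)).filter
      (fun r => r % 2 == 1 && openB (d.extend m) r) = rest.reverse := by
    rw [filter_congr' (g := fun r => (r % 2 == 1 && openB d r) && !(m.ref == r))]
    · rw [filter_and _ (fun r => r % 2 == 1 && openB d r) (fun r => !(m.ref == r))]
      rw [pstack_filter_eq, hps, List.reverse_cons, List.filter_append]
      have e1 : (rest.reverse.filter fun r => !(m.ref == r)) = rest.reverse := by
        rw [List.filter_eq_self]
        intro x hx
        have hp := pstack_pairwise d
        rw [hps] at hp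
        have := (List.pairwise_cons.1 hp).1 x (List.mem_reverse.1 hx)
        simp
        omega
      have e2 : ([m.ref].filter fun r => !(m.ref == r)) = [] := by
        simp
      rw [e1, e2]
      simp
    · intro r hr
      rw [openB_extend_of_le hP (by have := List.mem_range.1 hr; omega), hdef]
      simp [Bool.and_assoc]
  have h2 : [d.moves.length + 1].filter
      (fun r => r % 2 == 1 && openB (d.extend m) r) = [] := by
    have hc : ((d.moves.length + 1) % 2 == 1) = false := by simp; omega
    simp [List.filter_cons, hc]
  rw [h1, h2]
  simp

/-! #### absStack transport -/

lemma absStack_extend_eq_of_pstack_eq (hP : ParticleOK d)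
    (h : pstack (d.extend m) = pstack d) : absStack (d.extend m) = absStack d := by
  unfold absStack
  rw [h]
  refine List.map_congr_left fun r hr => ?_
  exact entry_extend_of_le hP (by have := (mem_pstack.1 hr).1; omega)

lemma absStack_extend_Oatk (hP : ParticleOK d) (hn : d.moves.length % 2 = 0)
    (hatk : m.isAttack = true) (href : m.ref ≤ d.moves.length) :
    absStack (d.extend m) =
      entry (d.extend m) (d.moves.length + 1) :: absStack d := by
  unfold absStack
  rw [pstack_extend_Oatk hP hn hatk href, List.map_cons]
  congr 1
  refine List.map_congr_left fun r hr => ?_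
  exact entry_extend_of_le hP (by have := (mem_pstack.1 hr).1; omega)

lemma absStack_extend_Pdef (hP : ParticleOK d) (hdef : m.isAttack = false)
    (hn : d.moves.length % 2 = 1) {rest : List ℕ} (hps : pstack d = m.ref :: rest) :
    absStack (d.extend m) = rest.map (entry d) := by
  unfold absStack
  rw [pstack_extend_Pdef hP hdef hn hps]
  refine List.map_congr_left fun r hr => ?_
  have : r ∈ pstack d := by rw [hps]; exact List.mem_cons_of_mem _ hr
  exact entry_extend_of_le hP (by have := (mem_pstack.1 this).1; omega)

end Transport

/-! #### Legality of extensions -/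

section Legality

variable {d : Dialogue} {m : Move}

lemma stmtAt_extend_none {k : ℕ} (hk : d.moves.length + 1 < k) :
    (d.extend m).stmtAt k = none := by
  unfold Dialogue.stmtAt Dialogue.extend
  rw [if_neg (by omega)]
  have : (d.moves ++ [m])[k - 1]? = none := by
    rw [List.getElem?_eq_none]
    simp
    omega
  rw [this]
  rfl

lemma moveOK_extend_old (hP : ParticleOK d) {n : ℕ} {mv : Move}
    (hn : n ≤ d.moves.length) (h : MoveOK d n mv) : MoveOK (d.extend m) n mv := by
  obtain ⟨h1, h2, h3, h4⟩ := h
  refine ⟨h1, h2, ?_, ?_⟩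
  · intro ha
    obtain ⟨ψ, hψ, hatt⟩ := h3 ha
    exact ⟨ψ, by rw [stmtAt_extend_of_le (by omega)]; exact hψ, hatt⟩
  · intro ha
    obtain ⟨a, χ, hma, haa, hsa, hd⟩ := h4 ha
    have hra : a.ref < mv.ref := refLt hP hma
    exact ⟨a, χ, by rw [moveAt_extend_of_le (by omega)]; exact hma, haa,
      by rw [stmtAt_extend_of_le (by omega)]; exact hsa, hd⟩

lemma particleOK_extend (hP : ParticleOK d)
    (hm : MoveOK (d.extend m) (d.moves.length + 1) m) : ParticleOK (d.extend m) := by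
  intro i mv h
  have hlen : i < d.moves.length + 1 := by
    obtain ⟨hb, -⟩ := List.getElem?_eq_some_iff.1 h
    simpa [Dialogue.extend] using hb
  rcases Nat.lt_or_ge i d.moves.length with hi | hi
  · have h' : d.moves[i]? = some mv := by
      have he : (d.extend m).moves[i]? = d.moves[i]? := by
        show (d.moves ++ [m])[i]? = _
        exact List.getElem?_append_left hi
      rw [he] at h
      exact h
    exact moveOK_extend_old hP (by omega) (hP i mv h')
  · have hieq : i = d.moves.length := by omega
    subst hieq
    have : mv = m := by
      have he : (d.extend m).moves[d.moves.length]? = some m := by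
        show (d.moves ++ [m])[d.moves.length]? = some m
        simp
      rw [he] at h
      exact (Option.some_inj.1 h).symm
    subst this
    exact hm

/-- Master legality lemma for the O-moves prescribed by rule E. -/
lemma legal_ext_O (hL : Legal rulesetEprime d) (hn : d.moves.length % 2 = 0)
    (href : m.ref = d.moves.length)
    (hatk : m.isAttack = true →
      ∃ ψ, d.stmtAt m.ref = some (.form ψ) ∧ Attacks m.statement ψ)
    (hdef : m.isAttack = false →
      ∃ a χ, d.moveAt m.ref = some a ∧ a.isAttack = true ∧
        d.stmtAt a.ref = some (.form χ) ∧ Defends χ a.statement m.statement) :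
    LegalExt rulesetEprime d m := by
  obtain ⟨hP, hD10, hD11, hD12, hD13, hE⟩ := hL
  have hrefle : m.ref ≤ d.moves.length := by omega
  have hmok : MoveOK (d.extend m) (d.moves.length + 1) m := by
    refine ⟨by omega, by omega, ?_, ?_⟩
    · intro ha
      obtain ⟨ψ, h1, h2⟩ := hatk ha
      exact ⟨ψ, by rw [stmtAt_extend_of_le (by omega)]; exact h1, h2⟩
    · intro ha
      obtain ⟨a, χ, h1, h2, h3, h4⟩ := hdef ha
      have : a.ref < m.ref := refLt hP h1
      exact ⟨a, χ, by rw [moveAt_extend_of_le (by omega)]; exact h1, h2,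
        by rw [stmtAt_extend_of_le (by omega)]; exact h3, h4⟩
  have hnewDef : ∀ {r'}, IsDefenseOf (d.extend m) (d.moves.length + 1) r' →
      m.isAttack = false ∧ m.ref = r' := by
    rintro r' ⟨mv, hmv, hf, hr⟩
    rw [moveAt_extend_self] at hmv
    cases hmv
    exact ⟨hf, hr⟩
  have hnewAtk : ∀ {r'}, IsAttackOn (d.extend m) (d.moves.length + 1) r' →
      m.isAttack = true ∧ m.ref = r' := by
    rintro r' ⟨mv, hmv, hf, hr⟩
    rw [moveAt_extend_self] at hmv
    cases hmv
    exact ⟨hf, hr⟩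
  have habsD : ∀ n, n ≤ d.moves.length → ¬ IsDefenseOf d n d.moves.length := by
    rintro n hn' ⟨mv, hmv, -, hr⟩
    have := refLt hP hmv
    omega
  have habsA : ∀ n, n ≤ d.moves.length → ¬ IsAttackOn d n d.moves.length := by
    rintro n hn' ⟨mv, hmv, -, hr⟩
    have := refLt hP hmv
    omega
  refine ⟨particleOK_extend hP hmok, ?_, ?_, ?_, ?_, ?_⟩
  · -- D10′
    intro n q hne hst
    have hn2 : n ≤ d.moves.length := by
      by_cases hc : n ≤ d.moves.length
      · exact hc
      · by_cases hc2 : n = d.moves.length + 1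
        · omega
        · rw [stmtAt_extend_none (by omega)] at hst
          exact absurd hst (by simp)
    rw [stmtAt_extend_of_le hn2] at hst
    obtain ⟨j, hj1, hj2, hj3⟩ := hD10 n q hne hst
    refine ⟨j, hj1, hj2, ?_⟩
    rcases hj3 with hj3 | hj3
    · exact Or.inl (by rw [stmtAt_extend_of_le (by omega)]; exact hj3)
    · exact Or.inr (by rw [stmtAt_extend_of_le (by omega)]; exact hj3)
  · -- D11
    intro n r hdef'
    have hb := isDef_bounds hdef'
    rw [extend_moves_length] at hb
    by_cases hcase : n ≤ d.moves.length
    · have hd0 : IsDefenseOf d n r := (isDef_extend_of_le hcase).1 hdef'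
      obtain ⟨ho, hno⟩ := hD11 n r hd0
      have hrn : r < n := by
        obtain ⟨mv, hmv, -, hrfl⟩ := hd0
        have := refLt hP hmv
        omega
      constructor
      · rw [openAt_extend_of_le (by omega) (by omega)]
        exact ho
      · rintro ⟨r', h1, h2, h3, h4⟩
        exact hno ⟨r', h1, h2, h3, (openAt_extend_of_le (by omega) (by omega)).1 h4⟩
    · have hn1 : n = d.moves.length + 1 := by omega
      subst hn1
      obtain ⟨hmf, hmr⟩ := hnewDef hdef'
      subst hmr
      obtain ⟨a, χ, h1, h2, h3, h4⟩ := hdef hmf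
      constructor
      · constructor
        · exact ⟨a, by rw [moveAt_extend_of_le hrefle]; exact h1, h2⟩
        · rintro ⟨j, hj, hdj⟩
          have hjc : j ≤ d.moves.length := by omega
          have hdj' : IsDefenseOf d j m.ref := (isDef_extend_of_le hjc).1 hdj
          rw [href] at hdj'
          exact habsD j hjc hdj'
      · rintro ⟨r', h1', h2', h3', h4'⟩
        omega
  · -- D12
    intro n1 n2 r h1 h2
    have hb1 := isDef_bounds h1
    have hb2 := isDef_bounds h2
    rw [extend_moves_length] at hb1 hb2
    by_cases c1 : n1 ≤ d.moves.length <;> by_cases c2 : n2 ≤ d.moves.length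
    · exact hD12 n1 n2 r ((isDef_extend_of_le c1).1 h1) ((isDef_extend_of_le c2).1 h2)
    · have hn2 : n2 = d.moves.length + 1 := by omega
      subst hn2
      obtain ⟨-, hmr⟩ := hnewDef h2
      subst hmr
      have h1' := (isDef_extend_of_le c1).1 h1
      rw [href] at h1'
      exact absurd h1' (habsD n1 c1)
    · have hn1 : n1 = d.moves.length + 1 := by omega
      subst hn1
      obtain ⟨-, hmr⟩ := hnewDef h1
      subst hmr
      have h2' := (isDef_extend_of_le c2).1 h2
      rw [href] at h2'
      exact absurd h2' (habsD n2 c2)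
    · omega
  · -- D13
    intro n1 n2 r hr h1 h2
    have hb1 : n1 ≤ d.moves.length + 1 := by
      obtain ⟨mv, hmv, -, -⟩ := h1
      have := moveAt_some_bounds hmv
      rw [extend_moves_length] at this
      omega
    have hb2 : n2 ≤ d.moves.length + 1 := by
      obtain ⟨mv, hmv, -, -⟩ := h2
      have := moveAt_some_bounds hmv
      rw [extend_moves_length] at this
      omega
    have keyA : ∀ n, n ≤ d.moves.length → IsAttackOn (d.extend m) n r → IsAttackOn d n r := by
      intro n hn' ⟨mv, hmv, ha, hr'⟩
      exact ⟨mv, by rw [moveAt_extend_of_le hn'] at hmv; exact hmv, ha, hr'⟩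
    by_cases c1 : n1 ≤ d.moves.length <;> by_cases c2 : n2 ≤ d.moves.length
    · exact hD13 n1 n2 r hr (keyA n1 c1 h1) (keyA n2 c2 h2)
    · have hn2 : n2 = d.moves.length + 1 := by omega
      subst hn2
      obtain ⟨-, hmr⟩ := hnewAtk h2
      subst hmr
      have h1' := keyA n1 c1 h1
      rw [href] at h1'
      exact absurd h1' (habsA n1 c1)
    · have hn1 : n1 = d.moves.length + 1 := by omega
      subst hn1
      obtain ⟨-, hmr⟩ := hnewAtk h1
      subst hmr
      have h2' := keyA n2 c2 h2
      rw [href] at h2'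
      exact absurd h2' (habsA n2 c2)
    · omega
  · -- E
    intro n mv hodd hmv
    have hb := moveAt_some_bounds hmv
    rw [extend_moves_length] at hb
    by_cases hc : n ≤ d.moves.length
    · exact hE n mv hodd (by rw [moveAt_extend_of_le hc] at hmv; exact hmv)
    · have : n = d.moves.length + 1 := by omega
      subst this
      rw [moveAt_extend_self] at hmv
      cases hmv
      simp [href]

end Legality

/-! #### Simulation of winning strategies into the abstract game -/

section Simulation

lemma fnone_parity_extend {d : Dialogue} {m : Move} (hn : d.moves.length % 2 = 0) :
    FocusRel (d.extend m) .fnone := by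
  show ((d.extend m).moves.length + 1) % 2 = 0
  rw [extend_moves_length]
  omega

lemma entry_extend_new {d : Dialogue} {m : Move} (href : m.ref ≤ d.moves.length) :
    entry (d.extend m) (d.moves.length + 1) =
      entryAux m.statement (d.stmtAt m.ref) := by
  unfold entry
  rw [moveAt_extend_self]
  show entryAux m.statement ((d.extend m).stmtAt m.ref) = _
  rw [stmtAt_extend_of_le href]

lemma rep_Odef {d : Dialogue} {δ : Formula} (hP : ParticleOK d)
    (hn : d.moves.length % 2 = 0) :
    Rep (d.extend ⟨.form δ, false, d.moves.length⟩) (δ :: oForms d) (absStack d) .fnone := by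
  refine ⟨(oForms_extend_O_form hn rfl).symm, ?_, fnone_parity_extend hn⟩
  exact (absStack_extend_eq_of_pstack_eq hP
    (pstack_extend_Odef hP rfl hn (le_refl _))).symm

lemma buildFdef {d : Dialogue} (hL : Legal rulesetEprime d)
    (hn : d.moves.length % 2 = 0) {ψ : Formula}
    (hst : d.stmtAt d.moves.length = some (.form ψ))
    (K : ∀ m : Move, LegalExt rulesetEprime d m →
      ∀ Γ s f, Rep (d.extend m) Γ s f → AWin Γ s f) :
    AWin (oForms d) (absStack d) (.fdef ψ) := by
  have hP := hL.1
  cases ψ with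
  | atom q =>
      obtain ⟨j, hj1, hj2, hj3⟩ := hL.2.1 d.moves.length q hn hst
      refine AWin.fdefAtom _ _ q ?_
      rcases hj3 with hj3 | hj3
      · exact Or.inl (mem_oForms hj2 hj3)
      · exact Or.inr (mem_oForms hj2 hj3)
  | and a b =>
      have hleg1 : LegalExt rulesetEprime d ⟨.andL, true, d.moves.length⟩ :=
        legal_ext_O hL hn rfl (fun _ => ⟨.and a b, hst, Attacks.andL a b⟩)
          (fun hc => by simp at hc)
      have hleg2 : LegalExt rulesetEprime d ⟨.andR, true, d.moves.length⟩ :=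
        legal_ext_O hL hn rfl (fun _ => ⟨.and a b, hst, Attacks.andR a b⟩)
          (fun hc => by simp at hc)
      have hrep1 : Rep (d.extend ⟨.andL, true, d.moves.length⟩) (oForms d)
          ([a] :: absStack d) .fnone := by
        refine ⟨?_, ?_, fnone_parity_extend hn⟩
        · rw [oForms_extend_none (by simp [isFormO])]
        · rw [absStack_extend_Oatk hP hn rfl (le_refl _),
            entry_extend_new (le_refl _)]
          show _ = entryAux Statement.andL (d.stmtAt d.moves.length) :: absStack d
          rw [hst]
          rfl
      have hrep2 : Rep (d.extend ⟨.andR, true, d.moves.length⟩) (oForms d)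
          ([b] :: absStack d) .fnone := by
        refine ⟨?_, ?_, fnone_parity_extend hn⟩
        · rw [oForms_extend_none (by simp [isFormO])]
        · rw [absStack_extend_Oatk hP hn rfl (le_refl _),
            entry_extend_new (le_refl _)]
          show _ = entryAux Statement.andR (d.stmtAt d.moves.length) :: absStack d
          rw [hst]
          rfl
      exact AWin.fdefAnd _ _ a b (K _ hleg1 _ _ _ hrep1) (K _ hleg2 _ _ _ hrep2)
  | or a b =>
      have hleg1 : LegalExt rulesetEprime d ⟨.qmark, true, d.moves.length⟩ :=
        legal_ext_O hL hn rfl (fun _ => ⟨.or a b, hst, Attacks.qmark a b⟩)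
          (fun hc => by simp at hc)
      have hrep1 : Rep (d.extend ⟨.qmark, true, d.moves.length⟩) (oForms d)
          ([a, b] :: absStack d) .fnone := by
        refine ⟨?_, ?_, fnone_parity_extend hn⟩
        · rw [oForms_extend_none (by simp [isFormO])]
        · rw [absStack_extend_Oatk hP hn rfl (le_refl _),
            entry_extend_new (le_refl _)]
          show _ = entryAux Statement.qmark (d.stmtAt d.moves.length) :: absStack d
          rw [hst]
          rfl
      exact AWin.fdefOr _ _ a b (K _ hleg1 _ _ _ hrep1)
  | imp a b =>
      have hleg1 : LegalExt rulesetEprime d ⟨.form a, true, d.moves.length⟩ :=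
        legal_ext_O hL hn rfl (fun _ => ⟨.imp a b, hst, Attacks.imp a b⟩)
          (fun hc => by simp at hc)
      have hrep1 : Rep (d.extend ⟨.form a, true, d.moves.length⟩) (a :: oForms d)
          ([b] :: absStack d) .fnone := by
        refine ⟨?_, ?_, fnone_parity_extend hn⟩
        · rw [oForms_extend_O_form hn rfl]
        · rw [absStack_extend_Oatk hP hn rfl (le_refl _),
            entry_extend_new (le_refl _)]
          show _ = entryAux (Statement.form a) (d.stmtAt d.moves.length) :: absStack d
          rw [hst]
          rfl
      exact AWin.fdefImp _ _ a b (K _ hleg1 _ _ _ hrep1)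
  | neg a =>
      have hleg1 : LegalExt rulesetEprime d ⟨.form a, true, d.moves.length⟩ :=
        legal_ext_O hL hn rfl (fun _ => ⟨.neg a, hst, Attacks.neg a⟩)
          (fun hc => by simp at hc)
      have hrep1 : Rep (d.extend ⟨.form a, true, d.moves.length⟩) (a :: oForms d)
          ([] :: absStack d) .fnone := by
        refine ⟨?_, ?_, fnone_parity_extend hn⟩
        · rw [oForms_extend_O_form hn rfl]
        · rw [absStack_extend_Oatk hP hn rfl (le_refl _),
            entry_extend_new (le_refl _)]
          show _ = entryAux (Statement.form a) (d.stmtAt d.moves.length) :: absStack d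
          rw [hst]
          rfl
      exact AWin.fdefNeg _ _ a (K _ hleg1 _ _ _ hrep1)

theorem sim {d : Dialogue}
    (hw : PWinningC rulesetEprime (fun _ _ => True) d) :
    Legal rulesetEprime d → ∀ Γ s f, Rep d Γ s f → AWin Γ s f := by
  induction hw with
  | pMove d m hturn hm hC h ih =>
      intro hL Γ s f hrep
      obtain ⟨hΓ, hs, hf⟩ := hrep
      have hP := hL.1
      have hturn' : (d.moves.length + 1) % 2 = 0 := hturn
      have hNodd : d.moves.length % 2 = 1 := by omega
      cases f with
      | fdef ψ => exact absurd hf.1 (by omega)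
      | fimp a b => exact absurd hf.1 (by omega)
      | fcon δ => exact absurd hf.1 (by omega)
      | fds a b => exact absurd hf.1 (by omega)
      | fnone =>
      obtain ⟨hlt, hpar, hA, hD⟩ := moveOK_last hm.1
      have hrefle : m.ref ≤ d.moves.length := by omega
      have hrodd : m.ref % 2 = 1 := by omega
      cases hatk : m.isAttack with
      | true =>
          obtain ⟨χ, hχ1, hχ2⟩ := hA hatk
          have hχ1d : d.stmtAt m.ref = some (.form χ) := by
            rw [stmtAt_extend_of_le hrefle] at hχ1
            exact hχ1
          have hmem : χ ∈ Γ := by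
            rw [hΓ]
            exact mem_oForms hrodd hχ1d
          have hΓ' : Γ = oForms (d.extend m) := by
            rw [hΓ, oForms_extend_P hNodd]
          have hs' : s = absStack (d.extend m) := by
            rw [hs, absStack_extend_eq_of_pstack_eq hP
              (pstack_extend_Patk hP hNodd hatk hrefle)]
          have hparx : ((d.extend m).moves.length + 1) % 2 = 1 := by
            rw [extend_moves_length]
            omega
          have hmvx : (d.extend m).moveAt ((d.extend m).moves.length) = some m := by
            rw [extend_moves_length]
            exact moveAt_extend_self
          generalize hstm : m.statement = st at hχ2
          cases hχ2 with
          | andL a b =>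
              refine AWin.atkAndL Γ s a b hmem (ih hm Γ s (.fcon a) ?_)
              exact ⟨hΓ', hs', hparx, m, hmvx, hatk, Or.inl ⟨hstm, b, hχ1⟩⟩
          | andR a b =>
              refine AWin.atkAndR Γ s a b hmem (ih hm Γ s (.fcon b) ?_)
              exact ⟨hΓ', hs', hparx, m, hmvx, hatk, Or.inr ⟨hstm, a, hχ1⟩⟩
          | qmark a b =>
              refine AWin.atkOr Γ s a b hmem (ih hm Γ s (.fds a b) ?_)
              exact ⟨hΓ', hs', hparx, m, hmvx, hatk, hstm, hχ1⟩
          | imp a b =>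
              refine AWin.atkImp Γ s a b hmem (ih hm Γ s (.fimp a b) ?_)
              exact ⟨hΓ', hs', hparx, m, hmvx, hatk, hstm, hχ1⟩
          | neg a =>
              refine AWin.atkNeg Γ s a hmem (ih hm Γ s (.fdef a) ?_)
              exact ⟨hΓ', hs', hparx, Or.inr ⟨m, hmvx, hstm, Or.inr ⟨hatk, hχ1⟩⟩⟩
      | false =>
          obtain ⟨aM, χ, ha1, ha2, ha3, ha4⟩ := hD hatk
          have ha1d : d.moveAt m.ref = some aM := by
            rw [moveAt_extend_of_le hrefle] at ha1
            exact ha1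
          have haref : aM.ref < m.ref := refLt hP ha1d
          have ha3d : d.stmtAt aM.ref = some (.form χ) := by
            rw [stmtAt_extend_of_le (by omega)] at ha3
            exact ha3
          obtain ⟨hP', hD10', hD11', hD12', hD13', hE'⟩ := hm
          have hd' : IsDefenseOf (d.extend m) (d.moves.length + 1) m.ref :=
            ⟨m, moveAt_extend_self, hatk, rfl⟩
          obtain ⟨hopen, hnomax⟩ := hD11' (d.moves.length + 1) m.ref hd'
          have hopend : OpenAt d m.ref (d.moves.length + 1) :=
            (openAt_extend_of_le (le_refl _) hrefle).1 hopen
          have hmemP : m.ref ∈ pstack d :=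
            mem_pstack.2 ⟨by omega, hrodd, openB_iff.2 hopend⟩
          have hmax : ∀ r' ∈ pstack d, r' ≤ m.ref := by
            intro r' hr'
            by_contra hc
            obtain ⟨hr1, hr2, hr3⟩ := mem_pstack.1 hr'
            refine hnomax ⟨r', by omega, by omega, by omega, ?_⟩
            exact (openAt_extend_of_le (le_refl _) (by omega)).2 (openB_iff.1 hr3)
          obtain ⟨rest, hps⟩ := pstack_eq_cons_of_max hmemP hmax
          have hsx : s = entry d m.ref :: rest.map (entry d) := by
            rw [hs]
            unfold absStack
            rw [hps, List.map_cons]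
          have hΓ' : Γ = oForms (d.extend m) := by
            rw [hΓ, oForms_extend_P hNodd]
          have hs' : rest.map (entry d) = absStack (d.extend m) := by
            rw [absStack_extend_Pdef hP hatk hNodd hps]
          have hparx : ((d.extend m).moves.length + 1) % 2 = 1 := by
            rw [extend_moves_length]
            omega
          have hmvx : (d.extend m).moveAt ((d.extend m).moves.length) = some m := by
            rw [extend_moves_length]
            exact moveAt_extend_self
          generalize hsa : aM.statement = sa at ha4
          generalize hsm : m.statement = sm at ha4
          have hentry : entry d m.ref = entryAux sa (d.stmtAt aM.ref) := by
            unfold entry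
            rw [ha1d]
            show entryAux aM.statement (d.stmtAt aM.ref) = _
            rw [hsa]
          cases ha4 with
          | andL x y =>
              have hE : entry d m.ref = [x] := by rw [hentry, ha3d]; rfl
              refine hsx ▸ AWin.defend Γ (entry d m.ref) (rest.map (entry d)) x
                (by rw [hE]; exact List.mem_singleton.2 rfl) (by rw [hE]; simp)
                (ih ⟨hP', hD10', hD11', hD12', hD13', hE'⟩ Γ (rest.map (entry d)) (.fdef x)
                  ⟨hΓ', hs', hparx, Or.inr ⟨m, hmvx, hsm, Or.inl hatk⟩⟩)
          | andR x y =>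
              have hE : entry d m.ref = [y] := by rw [hentry, ha3d]; rfl
              refine hsx ▸ AWin.defend Γ (entry d m.ref) (rest.map (entry d)) y
                (by rw [hE]; exact List.mem_singleton.2 rfl) (by rw [hE]; simp)
                (ih ⟨hP', hD10', hD11', hD12', hD13', hE'⟩ Γ (rest.map (entry d)) (.fdef y)
                  ⟨hΓ', hs', hparx, Or.inr ⟨m, hmvx, hsm, Or.inl hatk⟩⟩)
          | orL x y =>
              have hE : entry d m.ref = [x, y] := by rw [hentry, ha3d]; rfl
              refine hsx ▸ AWin.defend Γ (entry d m.ref) (rest.map (entry d)) x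
                (by rw [hE]; simp) (by rw [hE]; simp)
                (ih ⟨hP', hD10', hD11', hD12', hD13', hE'⟩ Γ (rest.map (entry d)) (.fdef x)
                  ⟨hΓ', hs', hparx, Or.inr ⟨m, hmvx, hsm, Or.inl hatk⟩⟩)
          | orR x y =>
              have hE : entry d m.ref = [x, y] := by rw [hentry, ha3d]; rfl
              refine hsx ▸ AWin.defend Γ (entry d m.ref) (rest.map (entry d)) y
                (by rw [hE]; simp) (by rw [hE]; simp)
                (ih ⟨hP', hD10', hD11', hD12', hD13', hE'⟩ Γ (rest.map (entry d)) (.fdef y)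
                  ⟨hΓ', hs', hparx, Or.inr ⟨m, hmvx, hsm, Or.inl hatk⟩⟩)
          | imp x y =>
              have hE : entry d m.ref = [y] := by rw [hentry, ha3d]; rfl
              refine hsx ▸ AWin.defend Γ (entry d m.ref) (rest.map (entry d)) y
                (by rw [hE]; exact List.mem_singleton.2 rfl) (by rw [hE]; simp)
                (ih ⟨hP', hD10', hD11', hD12', hD13', hE'⟩ Γ (rest.map (entry d)) (.fdef y)
                  ⟨hΓ', hs', hparx, Or.inr ⟨m, hmvx, hsm, Or.inl hatk⟩⟩)
  | oMoves d hturn h ih =>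
      intro hL Γ s f hrep
      obtain ⟨hΓ, hs, hf⟩ := hrep
      have hP := hL.1
      have hnt : ¬ ((d.moves.length + 1) % 2 = 0) := hturn
      subst hΓ
      subst hs
      cases f with
      | fnone => exact absurd hf hnt
      | fdef ψ =>
          obtain ⟨hpar, hca⟩ := hf
          have hn : d.moves.length % 2 = 0 := by omega
          have hst : d.stmtAt d.moves.length = some (.form ψ) := by
            rcases hca with ⟨hmv, rfl⟩ | ⟨mv, h1, h2, -⟩
            · rw [hmv]
              rfl
            · rw [stmtAt_of_moveAt h1, h2]
          exact buildFdef hL hn hst (fun m hm => ih m hm hm)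
      | fimp a b =>
          obtain ⟨hpar, mv, h1, h2, h3, h4⟩ := hf
          have hn : d.moves.length % 2 = 0 := by omega
          have hlegb : LegalExt rulesetEprime d ⟨.form b, false, d.moves.length⟩ :=
            legal_ext_O hL hn rfl (fun hc => by simp at hc)
              (fun _ => ⟨mv, .imp a b, h1, h2, h4, by rw [h3]; exact Defends.imp a b⟩)
          have hb := ih _ hlegb hlegb _ _ _ (rep_Odef hP hn)
          have hsta : d.stmtAt d.moves.length = some (.form a) := by
            rw [stmtAt_of_moveAt h1, h3]
          have ha := buildFdef hL hn hsta (fun m hm => ih m hm hm)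
          exact AWin.fimpI _ _ a b hb ha
      | fcon δ =>
          obtain ⟨hpar, mv, h1, h2, h34⟩ := hf
          have hn : d.moves.length % 2 = 0 := by omega
          have hleg : LegalExt rulesetEprime d ⟨.form δ, false, d.moves.length⟩ := by
            refine legal_ext_O hL hn rfl (fun hc => by simp at hc) (fun _ => ?_)
            rcases h34 with ⟨hstL, y, hsty⟩ | ⟨hstR, x, hstx⟩
            · exact ⟨mv, .and δ y, h1, h2, hsty, by rw [hstL]; exact Defends.andL δ y⟩
            · exact ⟨mv, .and x δ, h1, h2, hstx, by rw [hstR]; exact Defends.andR x δ⟩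
          exact AWin.fconI _ _ δ (ih _ hleg hleg _ _ _ (rep_Odef hP hn))
      | fds a b =>
          obtain ⟨hpar, mv, h1, h2, h3, h4⟩ := hf
          have hn : d.moves.length % 2 = 0 := by omega
          have hlega : LegalExt rulesetEprime d ⟨.form a, false, d.moves.length⟩ :=
            legal_ext_O hL hn rfl (fun hc => by simp at hc)
              (fun _ => ⟨mv, .or a b, h1, h2, h4, by rw [h3]; exact Defends.orL a b⟩)
          have hlegb : LegalExt rulesetEprime d ⟨.form b, false, d.moves.length⟩ :=
            legal_ext_O hL hn rfl (fun hc => by simp at hc)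
              (fun _ => ⟨mv, .or a b, h1, h2, h4, by rw [h3]; exact Defends.orR a b⟩)
          exact AWin.fdsI _ _ a b (ih _ hlega hlega _ _ _ (rep_Odef hP hn))
            (ih _ hlegb hlegb _ _ _ (rep_Odef hP hn))

end Simulation

/-! #### From validity to stable provability -/

section FromValidity

lemma oForms_nil {φ : Formula} : oForms ⟨φ, []⟩ = [] := rfl

lemma absStack_nil {φ : Formula} : absStack ⟨φ, []⟩ = [] := rfl

lemma focusrel_init {φ : Formula} : FocusRel ⟨φ, []⟩ (.fdef φ) :=
  ⟨rfl, Or.inl ⟨rfl, rfl⟩⟩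

theorem stable_of_valid {φ : Formula} (h : valid rulesetEprime φ) : StableProv φ := by
  obtain ⟨hleg, hwin⟩ := h
  have hA : AWin [] [] (.fdef φ) :=
    sim hwin hleg [] [] (.fdef φ) ⟨oForms_nil.symm, absStack_nil.symm, focusrel_init⟩
  exact AWin.sound hA

end FromValidity

/-! #### Eliminating the stability axioms -/

section Elimination

def tfm : Formula := .imp (.atom 0) (.atom 0)

def sigf (p : ℕ) (ps : List ℕ) : ℕ → Formula :=
  fun q => if q ∈ p :: ps then .atom q else tfm

private lemma ipTrans {a b c : Formula} (h1 : IProv (.imp a b)) (h2 : IProv (.imp b c)) :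
    IProv (.imp a c) :=
  ipMP (ipMP (IProv.s a b c) (ipMP (IProv.k (.imp b c) a) h2)) h1

private lemma ipWeak {a : Formula} (c : Formula) (h : IProv a) : IProv (.imp c a) :=
  ipMP (IProv.k a c) h

lemma IProv_subst (σ : ℕ → Formula) {a : Formula} (h : IProv a) : IProv (a.subst σ) := by
  induction h with
  | k a b => exact IProv.k _ _
  | s a b c => exact IProv.s _ _ _
  | andE1 a b => exact IProv.andE1 _ _
  | andE2 a b => exact IProv.andE2 _ _
  | andI a b => exact IProv.andI _ _
  | orI1 a b => exact IProv.orI1 _ _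
  | orI2 a b => exact IProv.orI2 _ _
  | orE a b c => exact IProv.orE _ _ _
  | negI a b => exact IProv.negI _ _
  | negE a b => exact IProv.negE _ _
  | mp a b h1 h2 ih1 ih2 => exact IProv.mp _ _ ih1 ih2

lemma conj_proj : ∀ (fs : List Formula) (f g : Formula), g = f ∨ g ∈ fs →
    IProv (.imp (conjList f fs) g)
  | [], f, g, hg => by
      rcases hg with rfl | hg
      · exact ipI g
      · exact absurd hg List.not_mem_nil
  | f' :: fs', f, g, hg => by
      rcases hg with rfl | hg
      · exact IProv.andE1 _ _
      · exact ipTrans (IProv.andE2 f (conjList f' fs'))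
          (conj_proj fs' f' g (List.mem_cons.1 hg))

lemma stabConj_proj {p : ℕ} {ps : List ℕ} {q : ℕ} (hq : q ∈ p :: ps) :
    IProv (.imp (stabConj p ps) (stab q)) := by
  unfold stabConj
  apply conj_proj
  rcases List.mem_cons.1 hq with rfl | hq
  · exact Or.inl rfl
  · exact Or.inr (List.mem_map_of_mem hq)

lemma stable_elim (p : ℕ) (ps : List ℕ) {a : Formula} (h : StableProv a) :
    IProv (.imp (stabConj p ps) (a.subst (sigf p ps))) := by
  induction h with
  | intuit a ha => exact ipWeak _ (IProv_subst _ ha)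
  | stab q =>
      by_cases hq : q ∈ p :: ps
      · have he : (stab q).subst (sigf p ps) = stab q := by
          simp [stab, Formula.subst, sigf, hq]
        rw [he]
        exact stabConj_proj hq
      · have he : (stab q).subst (sigf p ps) = .imp (.neg (.neg tfm)) tfm := by
          simp [stab, Formula.subst, sigf, hq]
        rw [he]
        exact ipWeak _ (ipWeak _ (ipI (.atom 0)))
  | mp a b h1 h2 ih1 ih2 =>
      exact ipMP (ipMP (IProv.s (stabConj p ps) (a.subst (sigf p ps))
        (b.subst (sigf p ps))) ih1) ih2

lemma subst_eq_self {σ : ℕ → Formula} {a : Formula}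
    (h : ∀ q ∈ a.atoms, σ q = .atom q) : a.subst σ = a := by
  induction a with
  | atom q => exact h q (List.mem_singleton.2 rfl)
  | neg a ih =>
      show Formula.neg (a.subst σ) = Formula.neg a
      rw [ih h]
  | and a b iha ihb =>
      show Formula.and (a.subst σ) (b.subst σ) = Formula.and a b
      rw [iha (fun q hq => h q (List.mem_append_left _ hq)),
        ihb (fun q hq => h q (List.mem_append_right _ hq))]
  | or a b iha ihb =>
      show Formula.or (a.subst σ) (b.subst σ) = Formula.or a b
      rw [iha (fun q hq => h q (List.mem_append_left _ hq)),
        ihb (fun q hq => h q (List.mem_append_right _ hq))]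
  | imp a b iha ihb =>
      show Formula.imp (a.subst σ) (b.subst σ) = Formula.imp a b
      rw [iha (fun q hq => h q (List.mem_append_left _ hq)),
        ihb (fun q hq => h q (List.mem_append_right _ hq))]

end Elimination

/-- If φ is E′-valid and p₁, …, pₙ lists all the atoms occurring in φ, then
((¬¬p₁ → p₁) ∧ … ∧ (¬¬pₙ → pₙ)) → φ is intuitionistically valid. -/
theorem Eprime_valid_reduces_to_IL_all_atoms (φ : Formula) (p : ℕ)
    (ps : List ℕ) (h : valid rulesetEprime φ)
    (hatoms : ∀ q, q ∈ φ.atoms ↔ q ∈ p :: ps) :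
    IProv (.imp (stabConj p ps) φ) := by
  have hst : StableProv φ := stable_of_valid h
  have h2 := stable_elim p ps hst
  rwa [subst_eq_self (fun q hq => by
    unfold sigf
    rw [if_pos ((hatoms q).1 hq)])] at h2

end LorenzenDialogues
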